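/- The number of partitions of n equals the number of triples (μ, α, β) where μ is a staircase partition, α and β are partitions into even parts, and |μ| + |α| + |β| = n. -/

import Mathlib

/-- A multiset of natural numbers represents a partition if all parts are positive. -/
def IsPartitionM (m : Multiset ℕ) : Prop := ∀ i ∈ m, 0 < i

/-- A partition all of whose parts are even (and positive). -/
def IsEvenPartition (m : Multiset ℕ) : Prop := IsPartitionM m ∧ ∀ i ∈ m, Even i

/-- A staircase partition: parts k, k-1, ..., 2, 1 (possibly empty). -/
def IsStaircase (m : Multiset ℕ) : Prop := ∃ k : ℕ, m = (Multiset.range k).map (· + 1)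

/-- An odd staircase: parts 2k-1, 2k-3, ..., 3, 1 (possibly empty); its size is k². -/
def IsOddStaircase (m : Multiset ℕ) : Prop := ∃ k : ℕ, m = (Multiset.range k).map (fun i => 2 * i + 1)

/-- A partition into distinct odd parts. -/
def IsDistinctOdd (m : Multiset ℕ) : Prop := m.Nodup ∧ ∀ i ∈ m, Odd i

/-- A partition whose odd parts are distinct (even parts unrestricted). -/
def IsPOD (m : Multiset ℕ) : Prop := IsPartitionM m ∧ ∀ i ∈ m, Odd i → m.count i ≤ 1

/-- A partition into distinct parts, all divisible by 3. -/
def IsDistinctMul3 (m : Multiset ℕ) : Prop := IsPartitionM m ∧ m.Nodup ∧ ∀ i ∈ m, 3 ∣ i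

/-- An overpartition: a partition together with a set of overlined part sizes,
each of which must occur in the partition. -/
def IsOverpartition (x : Multiset ℕ × Finset ℕ) : Prop :=
  IsPartitionM x.1 ∧ ∀ s ∈ x.2, s ∈ x.1

/-- A partition with designated summands: a partition together with, for each part size
occurring with multiplicity `c`, a choice of designated occurrence in `{1, ..., c}`
(and `0` for non-occurring sizes). -/
def IsDesignated (x : Multiset ℕ × (ℕ → ℕ)) : Prop :=
  IsPartitionM x.1 ∧ ∀ s : ℕ,
    (0 < x.1.count s → 1 ≤ x.2 s ∧ x.2 s ≤ x.1.count s) ∧ (x.1.count s = 0 → x.2 s = 0)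

namespace PSE



def enrich : ℕ → List ℕ → List ℕ
  | _, [] => []
  | k, a :: l => (a + k) :: enrich (k + 1) l

def deplete : ℕ → List ℕ → List ℕ
  | _, [] => []
  | k, a :: l => (a - k) :: deplete (k + 1) l

@[simp] lemma enrich_nil (k : ℕ) : enrich k [] = [] := rfl
@[simp] lemma enrich_cons (k a : ℕ) (l : List ℕ) :
    enrich k (a :: l) = (a + k) :: enrich (k + 1) l := rfl
@[simp] lemma deplete_nil (k : ℕ) : deplete k [] = [] := rfl
@[simp] lemma deplete_cons (k a : ℕ) (l : List ℕ) :
    deplete k (a :: l) = (a - k) :: deplete (k + 1) l := rfl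

@[simp] lemma length_enrich (k : ℕ) (l : List ℕ) : (enrich k l).length = l.length := by
  induction l generalizing k with
  | nil => rfl
  | cons a l ih => simp [ih]

@[simp] lemma length_deplete (k : ℕ) (l : List ℕ) : (deplete k l).length = l.length := by
  induction l generalizing k with
  | nil => rfl
  | cons a l ih => simp [ih]

lemma sum_enrich (k : ℕ) (l : List ℕ) :
    2 * (enrich k l).sum + l.length = 2 * l.sum + 2 * l.length * k + l.length * l.length := by
  induction l generalizing k with
  | nil => simp
  | cons a l ih =>
    have h := ih (k + 1)
    simp only [enrich_cons, List.sum_cons, List.length_cons]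
    ring_nf
    ring_nf at h
    omega

lemma enrich_lower (c k : ℕ) (l : List ℕ) (h : ∀ b ∈ l, c ≤ b) :
    ∀ y ∈ enrich k l, c + k ≤ y := by
  induction l generalizing k with
  | nil => simp
  | cons a l ih =>
    intro y hy
    rcases List.mem_cons.1 hy with rfl | hy
    · have := h a (by simp); omega
    · have := ih (k + 1) (fun b hb => h b (by simp [hb])) y hy
      omega

lemma sorted_enrich (k : ℕ) (l : List ℕ) (h : l.Pairwise (· ≤ ·)) :
    (enrich k l).Pairwise (· < ·) := by
  induction l generalizing k with
  | nil => simp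
  | cons a l ih =>
    rw [List.pairwise_cons] at h
    simp only [enrich_cons, List.pairwise_cons]
    refine ⟨fun y hy => ?_, ih (k + 1) h.2⟩
    have := enrich_lower a (k + 1) l h.1 y hy
    omega

lemma deplete_enrich (k : ℕ) (l : List ℕ) : deplete k (enrich k l) = l := by
  induction l generalizing k with
  | nil => rfl
  | cons a l ih => simp [ih]

lemma enrich_deplete (k : ℕ) (l : List ℕ) (h : l.Pairwise (· < ·)) (h2 : ∀ x ∈ l, k ≤ x) :
    enrich k (deplete k l) = l := by
  induction l generalizing k with
  | nil => rfl
  | cons a l ih =>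
    rw [List.pairwise_cons] at h
    have ha : k ≤ a := h2 a (by simp)
    simp only [deplete_cons, enrich_cons]
    rw [Nat.sub_add_cancel ha, ih (k + 1) h.2 (fun x hx => by have := h.1 x hx; omega)]

lemma deplete_all_ge (c k : ℕ) (l : List ℕ) (h : l.Pairwise (· < ·))
    (h2 : ∀ x ∈ l, c + k ≤ x) : ∀ y ∈ deplete k l, c ≤ y := by
  induction l generalizing k with
  | nil => simp
  | cons a l ih =>
    rw [List.pairwise_cons] at h
    intro y hy
    rcases List.mem_cons.1 hy with rfl | hy
    · have := h2 a (by simp); omega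
    · exact ih (k + 1) h.2 (fun x hx => by have := h.1 x hx; have := h2 a (by simp); omega) y hy

lemma sorted_deplete (k : ℕ) (l : List ℕ) (h : l.Pairwise (· < ·)) (h2 : ∀ x ∈ l, k ≤ x) :
    (deplete k l).Pairwise (· ≤ ·) := by
  induction l generalizing k with
  | nil => simp
  | cons a l ih =>
    rw [List.pairwise_cons] at h
    have ha : k ≤ a := h2 a (by simp)
    simp only [deplete_cons, List.pairwise_cons]
    refine ⟨?_, ih (k + 1) h.2 (fun x hx => by have := h.1 x hx; omega)⟩
    exact deplete_all_ge (a - k) (k + 1) l h.2 (fun x hx => by have := h.1 x hx; omega)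

lemma sum_deplete (k : ℕ) (l : List ℕ) (h : l.Pairwise (· < ·)) (h2 : ∀ x ∈ l, k ≤ x) :
    2 * l.sum + l.length = 2 * (deplete k l).sum + 2 * l.length * k + l.length * l.length := by
  have := sum_enrich k (deplete k l)
  rw [enrich_deplete k l h h2] at this
  simp only [length_deplete] at this
  omega





lemma sort_coe (l : List ℕ) (h : l.Pairwise (· ≤ ·)) :
    Multiset.sort (↑l : Multiset ℕ) (· ≤ ·) = l := by
  refine List.Perm.eq_of_pairwise' (Multiset.pairwise_sort _ _) h ?_
  rw [← Multiset.coe_eq_coe, Multiset.sort_eq]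

lemma sorted_zero_split (D : List ℕ) (h : D.Pairwise (· ≤ ·)) :
    List.replicate (D.length - Multiset.card (Multiset.filter (0 < ·) (↑D : Multiset ℕ))) 0 ++
      Multiset.sort (Multiset.filter (0 < ·) (↑D : Multiset ℕ)) (· ≤ ·) = D := by
  induction D with
  | nil => simp
  | cons a D ih =>
    rw [List.pairwise_cons] at h
    rcases Nat.eq_zero_or_pos a with rfl | ha
    · have hc : Multiset.filter (0 < ·) (↑(0 :: D) : Multiset ℕ)
          = Multiset.filter (0 < ·) (↑D : Multiset ℕ) := by simp
      rw [hc]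
      have hle : Multiset.card (Multiset.filter (0 < ·) (↑D : Multiset ℕ)) ≤ D.length := by
        simpa using Multiset.card_le_card (Multiset.filter_le (0 < ·) (↑D : Multiset ℕ))
      have : (0 :: D : List ℕ).length - Multiset.card (Multiset.filter (0 < ·) (↑D : Multiset ℕ))
          = (D.length - Multiset.card (Multiset.filter (0 < ·) (↑D : Multiset ℕ))) + 1 := by
        simp only [List.length_cons]; omega
      rw [this, List.replicate_succ, List.cons_append, ih h.2]
    · have hall : ∀ x ∈ (↑(a :: D) : Multiset ℕ), 0 < x := by
        intro x hx
        rcases List.mem_cons.1 (by simpa using hx) with rfl | hx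
        · exact ha
        · exact lt_of_lt_of_le ha (h.1 x hx)
      rw [Multiset.filter_eq_self.2 hall]
      have hs : (a :: D).Pairwise (· ≤ ·) := List.pairwise_cons.2 h
      simp [sort_coe _ hs]





def padL (s : ℕ) (m : Multiset ℕ) : List ℕ :=
  List.replicate (s - Multiset.card m) 0 ++ Multiset.sort m (· ≤ ·)

lemma sorted_padL (s : ℕ) (m : Multiset ℕ) : (padL s m).Pairwise (· ≤ ·) := by
  rw [padL, List.pairwise_append]
  refine ⟨?_, Multiset.pairwise_sort _ _, ?_⟩
  · exact List.pairwise_replicate.2 (Or.inr (le_refl 0))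
  · intro x hx y hy
    have : x = 0 := List.eq_of_mem_replicate hx
    omega

lemma length_padL (s : ℕ) (m : Multiset ℕ) (h : Multiset.card m ≤ s) :
    (padL s m).length = s := by
  simp only [padL, List.length_append, List.length_replicate, Multiset.length_sort]
  omega

lemma sum_padL (s : ℕ) (m : Multiset ℕ) : (padL s m).sum = m.sum := by
  have h2 : ((Multiset.sort m (· ≤ ·) : List ℕ) : Multiset ℕ).sum = m.sum := by
    rw [Multiset.sort_eq]
  simp only [padL, List.sum_append, List.sum_replicate, smul_zero, zero_add]
  exact h2

def fwdL (s : ℕ) (m : Multiset ℕ) : List ℕ := enrich 0 (padL s m)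

lemma sorted_fwdL (s : ℕ) (m : Multiset ℕ) : (fwdL s m).Pairwise (· < ·) :=
  sorted_enrich 0 _ (sorted_padL s m)

def fwdF (s : ℕ) (m : Multiset ℕ) : Finset ℕ :=
  ⟨(↑(fwdL s m) : Multiset ℕ), by
    rw [Multiset.coe_nodup]; exact (sorted_fwdL s m).nodup⟩

lemma card_fwdF (s : ℕ) (m : Multiset ℕ) (h : Multiset.card m ≤ s) :
    (fwdF s m).card = s := by
  simp only [fwdF, Finset.card_mk, Multiset.coe_card, fwdL, length_enrich]
  exact length_padL s m h

lemma sum_fwdF (s : ℕ) (m : Multiset ℕ) (h : Multiset.card m ≤ s) :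
    2 * (fwdF s m).sum id + s = 2 * m.sum + s * s := by
  have hs : (fwdF s m).sum id = (fwdL s m).sum := by
    rw [Finset.sum, Multiset.map_id]
    rfl
  have := sum_enrich 0 (padL s m)
  rw [length_padL s m h, sum_padL s m] at this
  rw [hs, fwdL]
  omega

def bwd (B : Finset ℕ) : Multiset ℕ :=
  Multiset.filter (0 < ·) (↑(deplete 0 (Finset.sort B (· ≤ ·))) : Multiset ℕ)

lemma partition_bwd (B : Finset ℕ) : IsPartitionM (bwd B) := by
  intro i hi
  exact (Multiset.of_mem_filter hi : 0 < i)

lemma card_bwd_le (B : Finset ℕ) : Multiset.card (bwd B) ≤ B.card := by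
  calc Multiset.card (bwd B) ≤ Multiset.card (↑(deplete 0 (Finset.sort B (· ≤ ·))) : Multiset ℕ) :=
        Multiset.card_le_card (Multiset.filter_le (0 < ·) _)
    _ = B.card := by
        rw [Multiset.coe_card, length_deplete, Finset.length_sort]

lemma bwd_fwdF (s : ℕ) (m : Multiset ℕ) (hp : IsPartitionM m) (h : Multiset.card m ≤ s) :
    bwd (fwdF s m) = m := by
  have hsort : Finset.sort (fwdF s m) (· ≤ ·) = fwdL s m := by
    have : Finset.sort (fwdF s m) (· ≤ ·) = Multiset.sort (↑(fwdL s m) : Multiset ℕ) (· ≤ ·) := rfl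
    rw [this, sort_coe _ ((sorted_fwdL s m).imp le_of_lt)]
  rw [bwd, hsort, fwdL, deplete_enrich]
  have : (↑(padL s m) : Multiset ℕ) = Multiset.replicate (s - Multiset.card m) 0 + m := by
    rw [padL, ← Multiset.coe_add, Multiset.coe_replicate, Multiset.sort_eq]
  rw [this, Multiset.filter_add]
  have h1 : Multiset.filter (0 < ·) (Multiset.replicate (s - Multiset.card m) 0) = 0 := by
    rw [Multiset.filter_eq_nil]
    intro a ha
    have := Multiset.eq_of_mem_replicate ha
    omega
  have h2 : Multiset.filter (0 < ·) m = m := Multiset.filter_eq_self.2 hp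
  rw [h1, h2, zero_add]

lemma fwdF_bwd (B : Finset ℕ) : fwdF B.card (bwd B) = B := by
  set L := Finset.sort B (· ≤ ·) with hL
  have hLs : L.Pairwise (· < ·) := (Finset.sortedLT_sort B).pairwise
  have hlen : L.length = B.card := Finset.length_sort _
  have hD : (deplete 0 L).Pairwise (· ≤ ·) :=
    sorted_deplete 0 L hLs (fun x _ => Nat.zero_le x)
  have hpad : padL B.card (bwd B) = deplete 0 L := by
    rw [padL, bwd]
    have hsplit := sorted_zero_split (deplete 0 L) hD
    have hcard : Multiset.card (↑(deplete 0 L) : Multiset ℕ) = B.card := by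
      rw [Multiset.coe_card, length_deplete]; exact hlen
    have hlen2 : (deplete 0 L).length = B.card := by rw [length_deplete]; exact hlen
    rw [← hlen2]
    exact hsplit
  apply Finset.val_injective
  show (↑(fwdL B.card (bwd B)) : Multiset ℕ) = B.val
  rw [fwdL, hpad, enrich_deplete 0 L hLs (fun x _ => Nat.zero_le x)]
  exact Finset.sort_eq B _





lemma card_le_sum (m : Multiset ℕ) (h : IsPartitionM m) : Multiset.card m ≤ m.sum := by
  induction m using Multiset.induction with
  | empty => simp
  | cons a t ih =>
    simp only [Multiset.card_cons, Multiset.sum_cons]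
    have ha := h a (by simp)
    have ht := ih (fun i hi => h i (by simp [hi]))
    omega

variable (n : ℕ)

def e0 : {m : Multiset ℕ // IsPartitionM m ∧ m.sum = n} ≃
    {m : Multiset ℕ // IsPartitionM m ∧ m.sum = n ∧ Multiset.card m ≤ 4 * n + 4} :=
  Equiv.subtypeEquivRight fun m =>
    ⟨fun h => ⟨h.1, h.2, by have := card_le_sum m h.1; omega⟩, fun h => ⟨h.1, h.2.1⟩⟩

def e1 : {m : Multiset ℕ // IsPartitionM m ∧ m.sum = n ∧ Multiset.card m ≤ 4 * n + 4} ≃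
    {B : Finset ℕ // B.card = 4 * n + 4 ∧
      2 * B.sum id + (4 * n + 4) = 2 * n + (4 * n + 4) * (4 * n + 4)} where
  toFun m := ⟨fwdF (4 * n + 4) m.1, by
    obtain ⟨m, hp, hsum, hcard⟩ := m
    refine ⟨card_fwdF _ _ hcard, ?_⟩
    have := sum_fwdF (4 * n + 4) m hcard
    rw [hsum] at this
    linarith⟩
  invFun B := ⟨bwd B.1, by
    refine ⟨partition_bwd _, ?_, ?_⟩
    · have h1 := fwdF_bwd B.1
      have h2 := sum_fwdF B.1.card (bwd B.1) (card_bwd_le B.1)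
      rw [h1, B.2.1] at h2
      have h3 := B.2.2
      linarith
    · have h1 := card_bwd_le B.1
      have h2 := B.2.1
      omega⟩
  left_inv m := Subtype.ext (bwd_fwdF (4 * n + 4) m.1 m.2.1 m.2.2.2)
  right_inv B := Subtype.ext (by
    have := fwdF_bwd B.1
    rw [B.2.1] at this
    exact this)





def evenHalf (B : Finset ℕ) : Finset ℕ := (B.filter (fun b => Even b)).image (· / 2)
def oddHalf (B : Finset ℕ) : Finset ℕ := (B.filter (fun b => ¬ Even b)).image (· / 2)
def unsplit (X Y : Finset ℕ) : Finset ℕ :=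
  X.image (fun x => 2 * x) ∪ Y.image (fun y => 2 * y + 1)

lemma image_evenHalf (B : Finset ℕ) :
    (evenHalf B).image (fun x => 2 * x) = B.filter (fun b => Even b) := by
  ext a
  simp only [evenHalf, Finset.mem_image, Finset.mem_filter, Nat.even_iff]
  constructor
  · rintro ⟨x, ⟨b, ⟨hb, he⟩, rfl⟩, rfl⟩
    constructor
    · have : 2 * (b / 2) = b := by omega
      rwa [this]
    · omega
  · rintro ⟨ha, he⟩
    exact ⟨a / 2, ⟨a, ⟨ha, he⟩, rfl⟩, by omega⟩

lemma image_oddHalf (B : Finset ℕ) :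
    (oddHalf B).image (fun y => 2 * y + 1) = B.filter (fun b => ¬ Even b) := by
  ext a
  simp only [oddHalf, Finset.mem_image, Finset.mem_filter, Nat.even_iff]
  constructor
  · rintro ⟨x, ⟨b, ⟨hb, he⟩, rfl⟩, rfl⟩
    constructor
    · have : 2 * (b / 2) + 1 = b := by omega
      rwa [this]
    · omega
  · rintro ⟨ha, he⟩
    exact ⟨a / 2, ⟨a, ⟨ha, he⟩, rfl⟩, by omega⟩

lemma two_mul_injective : Function.Injective (fun x : ℕ => 2 * x) := fun a b h => by
  simpa using h

lemma two_mul_add_one_injective : Function.Injective (fun x : ℕ => 2 * x + 1) := fun a b h => by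
  simpa using h

lemma card_evenHalf (B : Finset ℕ) : (evenHalf B).card = (B.filter (fun b => Even b)).card := by
  rw [← image_evenHalf, Finset.card_image_of_injective _ two_mul_injective]

lemma card_oddHalf (B : Finset ℕ) : (oddHalf B).card = (B.filter (fun b => ¬ Even b)).card := by
  rw [← image_oddHalf, Finset.card_image_of_injective _ two_mul_add_one_injective]

lemma sum_image_two_mul (X : Finset ℕ) : (X.image (fun x => 2 * x)).sum id = 2 * X.sum id := by
  rw [Finset.sum_image (fun x _ y _ h => two_mul_injective h), Finset.mul_sum]
  rfl

lemma sum_image_two_mul_add_one (Y : Finset ℕ) :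
    (Y.image (fun y => 2 * y + 1)).sum id = 2 * Y.sum id + Y.card := by
  rw [Finset.sum_image (fun x _ y _ h => two_mul_add_one_injective h)]
  simp only [id]
  rw [Finset.sum_add_distrib, ← Finset.mul_sum, Finset.sum_const, smul_eq_mul, mul_one]

lemma disjoint_unsplit (X Y : Finset ℕ) :
    Disjoint (X.image (fun x => 2 * x)) (Y.image (fun y => 2 * y + 1)) := by
  rw [Finset.disjoint_left]
  rintro a ha hb
  simp only [Finset.mem_image] at ha hb
  obtain ⟨x, _, rfl⟩ := ha
  obtain ⟨y, _, hy⟩ := hb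
  omega

lemma unsplit_halves (B : Finset ℕ) : unsplit (evenHalf B) (oddHalf B) = B := by
  rw [unsplit, image_evenHalf, image_oddHalf, Finset.filter_union_filter_not_eq]

lemma evenHalf_unsplit (X Y : Finset ℕ) : evenHalf (unsplit X Y) = X := by
  ext a
  simp only [evenHalf, unsplit, Finset.mem_image, Finset.mem_filter, Finset.mem_union,
    Nat.even_iff]
  constructor
  · rintro ⟨b, ⟨hb | hb, he⟩, rfl⟩
    · obtain ⟨x, hx, rfl⟩ := hb
      have : 2 * x / 2 = x := by omega
      rwa [this]
    · obtain ⟨y, hy, rfl⟩ := hb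
      omega
  · intro ha
    exact ⟨2 * a, ⟨Or.inl ⟨a, ha, rfl⟩, by omega⟩, by omega⟩

lemma oddHalf_unsplit (X Y : Finset ℕ) : oddHalf (unsplit X Y) = Y := by
  ext a
  simp only [oddHalf, unsplit, Finset.mem_image, Finset.mem_filter, Finset.mem_union,
    Nat.even_iff]
  constructor
  · rintro ⟨b, ⟨hb | hb, he⟩, rfl⟩
    · obtain ⟨x, hx, rfl⟩ := hb
      omega
    · obtain ⟨y, hy, rfl⟩ := hb
      have : (2 * y + 1) / 2 = y := by omega
      rwa [this]
  · intro ha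
    exact ⟨2 * a + 1, ⟨Or.inr ⟨a, ha, rfl⟩, by omega⟩, by omega⟩

lemma card_split (B : Finset ℕ) : (evenHalf B).card + (oddHalf B).card = B.card := by
  rw [card_evenHalf, card_oddHalf]
  exact Finset.card_filter_add_card_filter_not _

lemma sum_split (B : Finset ℕ) :
    B.sum id = 2 * (evenHalf B).sum id + 2 * (oddHalf B).sum id + (oddHalf B).card := by
  have h1 : (B.filter (fun b => Even b)).sum id + (B.filter (fun b => ¬ Even b)).sum id
      = B.sum id := Finset.sum_filter_add_sum_filter_not B _ id
  have h2 : (B.filter (fun b => Even b)).sum id = 2 * (evenHalf B).sum id := by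
    rw [← image_evenHalf, sum_image_two_mul]
  have h3 : (B.filter (fun b => ¬ Even b)).sum id
      = 2 * (oddHalf B).sum id + (oddHalf B).card := by
    rw [← image_oddHalf, sum_image_two_mul_add_one]
  omega

variable (n : ℕ)

def e2 : {B : Finset ℕ // B.card = 4 * n + 4 ∧
      2 * B.sum id + (4 * n + 4) = 2 * n + (4 * n + 4) * (4 * n + 4)} ≃
    {p : Finset ℕ × Finset ℕ // p.1.card + p.2.card = 4 * n + 4 ∧
      4 * p.1.sum id + 4 * p.2.sum id + 2 * p.2.card + (4 * n + 4)
        = 2 * n + (4 * n + 4) * (4 * n + 4)} where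
  toFun B := ⟨(evenHalf B.1, oddHalf B.1), by
    dsimp only
    have h1 := card_split B.1
    have h2 := sum_split B.1
    have h3 := B.2.1
    have h4 := B.2.2
    constructor
    · omega
    · linarith⟩
  invFun p := ⟨unsplit p.1.1 p.1.2, by
    have hc : (unsplit p.1.1 p.1.2).card = p.1.1.card + p.1.2.card := by
      rw [unsplit, Finset.card_union_of_disjoint (disjoint_unsplit _ _),
        Finset.card_image_of_injective _ two_mul_injective,
        Finset.card_image_of_injective _ two_mul_add_one_injective]
    have hs : (unsplit p.1.1 p.1.2).sum id
        = 2 * p.1.1.sum id + 2 * p.1.2.sum id + p.1.2.card := by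
      rw [unsplit, Finset.sum_union (disjoint_unsplit _ _), sum_image_two_mul,
        sum_image_two_mul_add_one]
      ring
    have h3 := p.2.1
    have h4 := p.2.2
    constructor
    · omega
    · linarith⟩
  left_inv B := Subtype.ext (unsplit_halves B.1)
  right_inv p := Subtype.ext (Prod.ext (evenHalf_unsplit _ _) (oddHalf_unsplit _ _))




variable (n : ℕ)

def e3 : {p : Finset ℕ × Finset ℕ // p.1.card + p.2.card = 4 * n + 4 ∧
      4 * p.1.sum id + 4 * p.2.sum id + 2 * p.2.card + (4 * n + 4)
        = 2 * n + (4 * n + 4) * (4 * n + 4)} ≃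
    {q : (ℕ × Multiset ℕ) × (ℕ × Multiset ℕ) //
      (IsPartitionM q.1.2 ∧ Multiset.card q.1.2 ≤ q.1.1) ∧
      (IsPartitionM q.2.2 ∧ Multiset.card q.2.2 ≤ q.2.1) ∧
      q.1.1 + q.2.1 = 4 * n + 4 ∧
      4 * q.1.2.sum + 4 * q.2.2.sum + 2 * (q.1.1 * q.1.1) + 2 * (q.2.1 * q.2.1) + (4 * n + 4)
        = 2 * n + (4 * n + 4) * (4 * n + 4) + 2 * q.1.1} where
  toFun p := ⟨((p.1.1.card, bwd p.1.1), (p.1.2.card, bwd p.1.2)), by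
    dsimp only
    refine ⟨⟨partition_bwd _, card_bwd_le _⟩, ⟨partition_bwd _, card_bwd_le _⟩, p.2.1, ?_⟩
    have hX := sum_fwdF p.1.1.card (bwd p.1.1) (card_bwd_le p.1.1)
    rw [fwdF_bwd p.1.1] at hX
    have hY := sum_fwdF p.1.2.card (bwd p.1.2) (card_bwd_le p.1.2)
    rw [fwdF_bwd p.1.2] at hY
    have h2 := p.2.2
    linarith⟩
  invFun q := ⟨(fwdF q.1.1.1 q.1.1.2, fwdF q.1.2.1 q.1.2.2), by
    dsimp only
    have hc1 := card_fwdF q.1.1.1 q.1.1.2 q.2.1.2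
    have hc2 := card_fwdF q.1.2.1 q.1.2.2 q.2.2.1.2
    have hs1 := sum_fwdF q.1.1.1 q.1.1.2 q.2.1.2
    have hs2 := sum_fwdF q.1.2.1 q.1.2.2 q.2.2.1.2
    have h3 := q.2.2.2.1
    have h4 := q.2.2.2.2
    rw [hc1, hc2]
    refine ⟨h3, ?_⟩
    linarith⟩
  left_inv p := Subtype.ext (Prod.ext (fwdF_bwd p.1.1) (fwdF_bwd p.1.2))
  right_inv q := Subtype.ext (Prod.ext
    (Prod.ext (card_fwdF _ _ q.2.1.2) (bwd_fwdF _ _ q.2.1.1 q.2.1.2))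
    (Prod.ext (card_fwdF _ _ q.2.2.1.2) (bwd_fwdF _ _ q.2.2.1.1 q.2.2.1.2)))





def kDec (s t : ℕ) : ℕ := if s ≤ t then t - s else s - t - 1
def sEnc (n k : ℕ) : ℕ := if k % 2 = 0 then (2*n+2) - k/2 else (2*n+2) + (k+1)/2
def tEnc (n k : ℕ) : ℕ := if k % 2 = 0 then (2*n+2) + k/2 else (2*n+2) - (k+1)/2

lemma enc_dec (n s t : ℕ) (h : s + t = 4*n+4) :
    sEnc n (kDec s t) = s ∧ tEnc n (kDec s t) = t := by
  unfold sEnc tEnc kDec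
  split_ifs <;> omega

lemma dec_enc (n k : ℕ) (hk : k ≤ n) : kDec (sEnc n k) (tEnc n k) = k := by
  unfold sEnc tEnc kDec
  split_ifs <;> omega

lemma k_le (n k x y : ℕ) (h : k * (k + 1) + x + y = 2 * n) : k ≤ n := by
  by_contra hc
  push_neg at hc
  nlinarith

variable (n : ℕ)

def e4 : {q : (ℕ × Multiset ℕ) × (ℕ × Multiset ℕ) //
      (IsPartitionM q.1.2 ∧ Multiset.card q.1.2 ≤ q.1.1) ∧
      (IsPartitionM q.2.2 ∧ Multiset.card q.2.2 ≤ q.2.1) ∧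
      q.1.1 + q.2.1 = 4 * n + 4 ∧
      4 * q.1.2.sum + 4 * q.2.2.sum + 2 * (q.1.1 * q.1.1) + 2 * (q.2.1 * q.2.1) + (4 * n + 4)
        = 2 * n + (4 * n + 4) * (4 * n + 4) + 2 * q.1.1} ≃
    {r : ℕ × Multiset ℕ × Multiset ℕ // IsPartitionM r.2.1 ∧ IsPartitionM r.2.2 ∧
      r.1 * (r.1 + 1) + 4 * r.2.1.sum + 4 * r.2.2.sum = 2 * n} where
  toFun q := ⟨(kDec q.1.1.1 q.1.2.1, q.1.1.2, q.1.2.2), by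
    obtain ⟨⟨⟨s, γ⟩, ⟨t, δ⟩⟩, ⟨hγ, hcγ⟩, ⟨hδ, hcδ⟩, h3, h4⟩ := q
    simp only at *
    refine ⟨hγ, hδ, ?_⟩
    unfold kDec
    split_ifs with hst
    · have h5 : s ≤ t := hst
      zify [h5] at h4 ⊢
      linear_combination h4 - (4*(n:ℤ) + 3 + s + t) * (by exact_mod_cast congrArg (Nat.cast : ℕ → ℤ) h3 : (s:ℤ) + t = 4*n+4)
    · have h5 : t + 1 ≤ s := by omega
      have he : s - t - 1 = s - (t+1) := by omega
      rw [he]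
      zify [h5] at h4 ⊢
      linear_combination h4 - (4*(n:ℤ) + 3 + s + t) * (by exact_mod_cast congrArg (Nat.cast : ℕ → ℤ) h3 : (s:ℤ) + t = 4*n+4)⟩
  invFun r := ⟨((sEnc n r.1.1, r.1.2.1), (tEnc n r.1.1, r.1.2.2)), by
    obtain ⟨⟨k, γ, δ⟩, hγ, hδ, h⟩ := r
    simp only at hγ hδ h ⊢
    have hk : k ≤ n := k_le n k _ _ (by simpa using h)
    have hγs : 4 * γ.sum ≤ 2 * n := by linarith [Nat.zero_le (k * (k + 1)), Nat.zero_le (4 * δ.sum)]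
    have hδs : 4 * δ.sum ≤ 2 * n := by linarith [Nat.zero_le (k * (k + 1)), Nat.zero_le (4 * γ.sum)]
    have hcγ := card_le_sum γ hγ
    have hcδ := card_le_sum δ hδ
    have hsb : n ≤ sEnc n k ∧ n ≤ tEnc n k ∧ sEnc n k + tEnc n k = 4 * n + 4 := by
      unfold sEnc tEnc; split_ifs <;> omega
    refine ⟨⟨hγ, by omega⟩, ⟨hδ, by omega⟩, hsb.2.2, ?_⟩
    rcases Nat.mod_two_eq_zero_or_one k with hp | hp
    · obtain ⟨j, rfl⟩ : ∃ j, k = 2 * j := ⟨k / 2, by omega⟩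
      have hs : sEnc n (2 * j) = (2*n+2) - j := by
        unfold sEnc; rw [if_pos (by omega)]; congr 1; omega
      have ht : tEnc n (2 * j) = (2*n+2) + j := by
        unfold tEnc; rw [if_pos (by omega)]; congr 1; omega
      rw [hs, ht]
      have hj : j ≤ 2*n+2 := by omega
      zify [hj] at h ⊢
      linear_combination h
    · obtain ⟨j, rfl⟩ : ∃ j, k = 2 * j + 1 := ⟨k / 2, by omega⟩
      have hs : sEnc n (2 * j + 1) = (2*n+2) + (j+1) := by
        unfold sEnc; rw [if_neg (by omega)]; congr 1; omega
      have ht : tEnc n (2 * j + 1) = (2*n+2) - (j+1) := by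
        unfold tEnc; rw [if_neg (by omega)]; congr 1; omega
      rw [hs, ht]
      have hj : j + 1 ≤ 2*n+2 := by omega
      zify [hj] at h ⊢
      linear_combination h⟩
  left_inv q := Subtype.ext (by
    obtain ⟨⟨⟨s, γ⟩, ⟨t, δ⟩⟩, ⟨-, -, h3, -⟩⟩ := q
    simp only at *
    have := enc_dec n s t h3
    rw [Prod.ext_iff, Prod.ext_iff, Prod.ext_iff]
    exact ⟨⟨this.1, rfl⟩, this.2, rfl⟩)
  right_inv r := Subtype.ext (by
    obtain ⟨⟨k, γ, δ⟩, ⟨-, -, h⟩⟩ := r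
    simp only at h ⊢
    have hk : k ≤ n := k_le n k _ _ (by simpa using h)
    rw [Prod.ext_iff]
    exact ⟨dec_enc n k hk, rfl⟩)





lemma stair_sum (k : ℕ) : 2 * ((Multiset.range k).map (· + 1)).sum = k * (k + 1) := by
  induction k with
  | zero => simp
  | succ k ih =>
    rw [Multiset.range_succ, Multiset.map_cons, Multiset.sum_cons]
    have : 2 * ((k + 1) + ((Multiset.range k).map (· + 1)).sum)
        = 2 * (k + 1) + 2 * ((Multiset.range k).map (· + 1)).sum := by ring
    rw [this, ih]
    ring

@[simp] lemma stair_card (k : ℕ) : Multiset.card ((Multiset.range k).map (· + 1)) = k := by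
  simp

lemma sum_map_double (γ : Multiset ℕ) : (γ.map (fun x => 2 * x)).sum = 2 * γ.sum := by
  induction γ using Multiset.induction with
  | empty => simp
  | cons a t ih =>
    simp only [Multiset.map_cons, Multiset.sum_cons, Multiset.sum_cons, ih]
    ring

lemma sum_map_half (α : Multiset ℕ) (h : ∀ a ∈ α, Even a) :
    2 * (α.map (fun x => x / 2)).sum = α.sum := by
  induction α using Multiset.induction with
  | empty => simp
  | cons a t ih =>
    simp only [Multiset.map_cons, Multiset.sum_cons]
    obtain ⟨c, rfl⟩ := h a (by simp)
    have ht := ih (fun x hx => h x (by simp [hx]))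
    have hc : (c + c) / 2 = c := by omega
    rw [hc]
    omega

lemma map_double_half (α : Multiset ℕ) (h : ∀ a ∈ α, Even a) :
    (α.map (fun x => x / 2)).map (fun x => 2 * x) = α := by
  rw [Multiset.map_map]
  have h2 : ∀ a ∈ α, ((fun x => 2 * x) ∘ (fun x => x / 2)) a = id a := by
    intro a ha
    obtain ⟨c, rfl⟩ := h a ha
    simp only [Function.comp_apply, id]
    omega
  rw [Multiset.map_congr rfl h2, Multiset.map_id]

lemma map_half_double (γ : Multiset ℕ) :
    (γ.map (fun x => 2 * x)).map (fun x => x / 2) = γ := by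
  rw [Multiset.map_map]
  have h2 : ∀ a ∈ γ, ((fun x => x / 2) ∘ (fun x => 2 * x)) a = id a := by
    intro a _
    simp only [Function.comp_apply, id]
    omega
  rw [Multiset.map_congr rfl h2, Multiset.map_id]

variable (n : ℕ)

def e5 : {r : ℕ × Multiset ℕ × Multiset ℕ // IsPartitionM r.2.1 ∧ IsPartitionM r.2.2 ∧
      r.1 * (r.1 + 1) + 4 * r.2.1.sum + 4 * r.2.2.sum = 2 * n} ≃
    {t : Multiset ℕ × Multiset ℕ × Multiset ℕ //
      IsStaircase t.1 ∧ IsEvenPartition t.2.1 ∧ IsEvenPartition t.2.2 ∧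
      t.1.sum + t.2.1.sum + t.2.2.sum = n} where
  toFun r := ⟨((Multiset.range r.1.1).map (· + 1), r.1.2.1.map (fun x => 2 * x),
      r.1.2.2.map (fun x => 2 * x)), by
    obtain ⟨⟨k, γ, δ⟩, hγ, hδ, h⟩ := r
    simp only at hγ hδ h ⊢
    refine ⟨⟨k, rfl⟩, ⟨?_, ?_⟩, ⟨?_, ?_⟩, ?_⟩
    · intro i hi
      obtain ⟨x, hx, rfl⟩ := Multiset.mem_map.1 hi
      have := hγ x hx; omega
    · intro i hi
      obtain ⟨x, hx, rfl⟩ := Multiset.mem_map.1 hi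
      exact ⟨x, by ring⟩
    · intro i hi
      obtain ⟨x, hx, rfl⟩ := Multiset.mem_map.1 hi
      have := hδ x hx; omega
    · intro i hi
      obtain ⟨x, hx, rfl⟩ := Multiset.mem_map.1 hi
      exact ⟨x, by ring⟩
    · have h1 := stair_sum k
      have h2 := sum_map_double γ
      have h3 := sum_map_double δ
      linarith⟩
  invFun t := ⟨(Multiset.card t.1.1, t.1.2.1.map (fun x => x / 2),
      t.1.2.2.map (fun x => x / 2)), by
    obtain ⟨⟨μ, α, β⟩, hst, ⟨hα, hαe⟩, ⟨hβ, hβe⟩, hsum⟩ := t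
    simp only at hst hα hαe hβ hβe hsum ⊢
    obtain ⟨k, rfl⟩ := hst
    rw [stair_card]
    refine ⟨?_, ?_, ?_⟩
    · intro i hi
      obtain ⟨x, hx, rfl⟩ := Multiset.mem_map.1 hi
      have h1 := hα x hx
      obtain ⟨c, rfl⟩ := hαe x hx
      omega
    · intro i hi
      obtain ⟨x, hx, rfl⟩ := Multiset.mem_map.1 hi
      have h1 := hβ x hx
      obtain ⟨c, rfl⟩ := hβe x hx
      omega
    · have h1 := stair_sum k
      have h2 := sum_map_half α hαe
      have h3 := sum_map_half β hβe
      linarith⟩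
  left_inv r := Subtype.ext (by
    obtain ⟨⟨k, γ, δ⟩, hγ, hδ, h⟩ := r
    simp only
    rw [stair_card, map_half_double, map_half_double])
  right_inv t := Subtype.ext (by
    obtain ⟨⟨μ, α, β⟩, hst, ⟨hα, hαe⟩, ⟨hβ, hβe⟩, hsum⟩ := t
    simp only at hst hα hαe hβ hβe hsum ⊢
    obtain ⟨k, rfl⟩ := hst
    rw [stair_card, map_double_half α hαe, map_double_half β hβe])

def bigEquiv : {m : Multiset ℕ // IsPartitionM m ∧ m.sum = n} ≃
    {t : Multiset ℕ × Multiset ℕ × Multiset ℕ //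
      IsStaircase t.1 ∧ IsEvenPartition t.2.1 ∧ IsEvenPartition t.2.2 ∧
      t.1.sum + t.2.1.sum + t.2.2.sum = n} :=
  ((((e0 n).trans (e1 n)).trans (e2 n)).trans (e3 n)).trans ((e4 n).trans (e5 n))




end PSE

theorem partitions_eq_staircase_even_pairs (n : ℕ) :
    Nat.card {m : Multiset ℕ // IsPartitionM m ∧ m.sum = n} =
    Nat.card {t : Multiset ℕ × Multiset ℕ × Multiset ℕ //
      IsStaircase t.1 ∧ IsEvenPartition t.2.1 ∧ IsEvenPartition t.2.2 ∧
      t.1.sum + t.2.1.sum + t.2.2.sum = n} := Nat.card_congr (PSE.bigEquiv n)
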